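/- Let G be a graph obtained by gluing k copies of a graph H (with at least 3 vertices) along a common edge (identifying one fixed edge of each copy). Then nac(G) = (nac(H) + 1)^k − 1, where nac denotes the number of NAC-colourings divided by 2. -/

import Mathlib

open scoped Classical

namespace NAC

variable {V : Type*}

/-- Number of edges of `G` in the list `l` whose colour under `c` is `b`. -/
noncomputable def cCount (G : SimpleGraph V) (c : G.edgeSet → Bool) (b : Bool)
    (l : List (Sym2 V)) : ℕ :=
  (l.filter fun e => decide (∃ h : e ∈ G.edgeSet, c ⟨e, h⟩ = b)).length

/-- `c` is a NAC-colouring of `G`: it is surjective (both colours are used) and no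
cycle of `G` contains exactly one edge of either colour. -/
def IsNAC (G : SimpleGraph V) (c : G.edgeSet → Bool) : Prop :=
  Function.Surjective c ∧
  ∀ ⦃u : V⦄ (w : G.Walk u u), w.IsCycle →
    cCount G c true w.edges ≠ 1 ∧ cCount G c false w.edges ≠ 1

/-- The number of NAC-colourings of `G`, divided by two. -/
noncomputable def nacNum (G : SimpleGraph V) : ℕ :=
  {c : G.edgeSet → Bool | IsNAC G c}.ncard / 2

end NAC

namespace NAC

variable {V : Type*}

open SimpleGraph

/-- The subgraph of `G` consisting of edges with colour `b`. -/
def colSub (G : SimpleGraph V) (c : G.edgeSet → Bool) (b : Bool) : SimpleGraph V where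
  Adj x y := ∃ h : G.Adj x y, c ⟨s(x, y), h⟩ = b
  symm := by
    refine ⟨?_⟩
    rintro x y ⟨h, hc⟩
    refine ⟨h.symm, ?_⟩
    have : (⟨s(y, x), h.symm⟩ : G.edgeSet) = ⟨s(x, y), h⟩ := Subtype.ext Sym2.eq_swap
    rw [this]; exact hc
  loopless := ⟨fun x h => G.irrefl h.1⟩

/-- `c` has no almost-monochromatic "cycle": for each edge, the endpoints are not
connected in the subgraph of the opposite colour. -/
def Good (G : SimpleGraph V) (c : G.edgeSet → Bool) : Prop :=
  ∀ ⦃x y : V⦄ (h : G.Adj x y), ¬ (colSub G c (!(c ⟨s(x, y), h⟩))).Reachable x y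

lemma reach_of_walk {W : Type*} {Γ : SimpleGraph V} {Δ : SimpleGraph W} (f : V → W)
    (hf : ∀ ⦃x y⦄, Γ.Adj x y → Δ.Reachable (f x) (f y)) :
    ∀ {x y : V}, Γ.Walk x y → Δ.Reachable (f x) (f y) := by
  intro x y w
  induction w with
  | nil => exact Reachable.refl _
  | cons h p ih => exact (hf h).trans ih

/-- A walk in `G` whose edges all have colour `b` yields reachability in `colSub`. -/
lemma reach_colSub_of_walk {G : SimpleGraph V} {c : G.edgeSet → Bool} {b : Bool}
    {x y : V} (w : G.Walk x y)
    (hw : ∀ e (he : e ∈ w.edges), c ⟨e, w.edges_subset_edgeSet he⟩ = b) :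
    (colSub G c b).Reachable x y := by
  induction w with
  | nil => exact Reachable.refl _
  | @cons a a' y h p ih =>
      have hadj : (colSub G c b).Adj a a' := ⟨h, hw s(a, a') (by simp)⟩
      refine hadj.reachable.trans (ih ?_)
      intro e he
      exact hw e (by simp [he])

lemma colSub_le {G : SimpleGraph V} {c : G.edgeSet → Bool} {b : Bool} :
    colSub G c b ≤ G := fun _ _ h => h.1

lemma colSub_edge_colour {G : SimpleGraph V} {c : G.edgeSet → Bool} {b : Bool}
    {e : Sym2 V} (he : e ∈ (colSub G c b).edgeSet) (he2 : e ∈ G.edgeSet) :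
    c ⟨e, he2⟩ = b := by
  revert he he2
  refine Sym2.ind (fun a a' => ?_) e
  rintro ⟨hadj, hcol⟩ he2
  exact hcol

lemma cCount_perm {G : SimpleGraph V} {c : G.edgeSet → Bool} {b : Bool}
    {l l' : List (Sym2 V)} (h : l.Perm l') : cCount G c b l = cCount G c b l' :=
  (h.filter _).length_eq

lemma cCount_cons {G : SimpleGraph V} {c : G.edgeSet → Bool} {b : Bool}
    {e : Sym2 V} {l : List (Sym2 V)} :
    cCount G c b (e :: l) =
      (if ∃ h : e ∈ G.edgeSet, c ⟨e, h⟩ = b then 1 else 0) + cCount G c b l := by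
  unfold cCount
  by_cases h : ∃ h : e ∈ G.edgeSet, c ⟨e, h⟩ = b <;>
    simp [List.filter_cons, h, add_comm]

lemma cCount_eq_zero {G : SimpleGraph V} {c : G.edgeSet → Bool} {b : Bool}
    {l : List (Sym2 V)} (h : ∀ e ∈ l, ∀ he : e ∈ G.edgeSet, c ⟨e, he⟩ = !b) :
    cCount G c b l = 0 := by
  unfold cCount
  rw [List.length_eq_zero_iff, List.filter_eq_nil_iff]
  intro e he
  simp only [decide_eq_true_eq]
  rintro ⟨hmem, hcol⟩
  rw [h e he hmem] at hcol
  simp at hcol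


lemma isNAC_iff {G : SimpleGraph V} {c : G.edgeSet → Bool} :
    IsNAC G c ↔ Function.Surjective c ∧ Good G c := by
  constructor
  · rintro ⟨hs, hcyc⟩
    refine ⟨hs, ?_⟩
    intro x y h
    revert hcyc
    generalize hb : c ⟨s(x, y), h⟩ = b
    intro hcyc hre
    obtain ⟨w0⟩ := hre.symm
    let p : (colSub G c (!b)).Path y x := w0.toPath
    have hsub : ∀ e ∈ (p : (colSub G c (!b)).Walk y x).edges, e ∈ G.edgeSet :=
      fun e he => (SimpleGraph.edgeSet_subset_edgeSet.2 colSub_le)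
        ((p : (colSub G c (!b)).Walk y x).edges_subset_edgeSet he)
    let q : G.Walk y x := (p : (colSub G c (!b)).Walk y x).transfer G hsub
    have hqpath : q.IsPath := p.2.transfer hsub
    have hqe : q.edges = (p : (colSub G c (!b)).Walk y x).edges :=
      SimpleGraph.Walk.edges_transfer _ hsub
    have hqcol : ∀ e ∈ q.edges, ∀ he2 : e ∈ G.edgeSet, c ⟨e, he2⟩ = !b := by
      intro e he he2
      rw [hqe] at he
      exact colSub_edge_colour ((p : (colSub G c (!b)).Walk y x).edges_subset_edgeSet he) he2
    have hxy : s(x, y) ∉ q.edges := by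
      intro hmem
      have := hqcol _ hmem h
      rw [hb] at this
      simp at this
    have hcycle : (SimpleGraph.Walk.cons h q).IsCycle :=
      SimpleGraph.Path.cons_isCycle ⟨q, hqpath⟩ h hxy
    have hcount : cCount G c b (SimpleGraph.Walk.cons h q).edges = 1 := by
      rw [SimpleGraph.Walk.edges_cons, cCount_cons]
      rw [cCount_eq_zero hqcol]
      have hx : ∃ hh : s(x, y) ∈ G.edgeSet, c ⟨s(x, y), hh⟩ = b := ⟨h, hb⟩
      simp only [hx, if_true]
    have := hcyc _ hcycle
    cases b
    · exact this.2 hcount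
    · exact this.1 hcount
  · rintro ⟨hs, hg⟩
    refine ⟨hs, ?_⟩
    intro u0 w hw
    have key : ∀ b : Bool, cCount G c b w.edges ≠ 1 := by
      intro b hone
      unfold cCount at hone
      obtain ⟨e, hfe⟩ := List.length_eq_one_iff.mp hone
      have heP : e ∈ w.edges ∧ ∃ hh : e ∈ G.edgeSet, c ⟨e, hh⟩ = b := by
        have : e ∈ List.filter (fun e => decide (∃ h : e ∈ G.edgeSet, c ⟨e, h⟩ = b)) w.edges := by
          rw [hfe]; simp
        rw [List.mem_filter] at this
        simpa using this
      have hothers : ∀ e' ∈ w.edges, e' ≠ e → ∀ he2 : e' ∈ G.edgeSet, c ⟨e', he2⟩ = !b := by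
        intro e' he' hne he2
        by_contra hcol
        have : e' ∈ List.filter (fun e => decide (∃ h : e ∈ G.edgeSet, c ⟨e, h⟩ = b)) w.edges := by
          rw [List.mem_filter]
          refine ⟨by simpa using he', ?_⟩
          simp only [decide_eq_true_eq]
          exact ⟨he2, by revert hcol; cases (c ⟨e', he2⟩) <;> cases b <;> simp⟩
        rw [hfe] at this
        simp at this
        exact hne this
      obtain ⟨hew, hemem, hecol⟩ : (e ∈ w.edges ∧ ∃ hh : e ∈ G.edgeSet, c ⟨e, hh⟩ = b) := heP
      clear hone hfe
      obtain ⟨x, y, rfl⟩ : ∃ x y, e = s(x, y) := by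
        induction e using Sym2.ind with | _ x y => exact ⟨x, y, rfl⟩
      have hadj : G.Adj x y := hemem
      have hxs : x ∈ w.support := SimpleGraph.Walk.fst_mem_support_of_mem_edges w hew
      have hperm : (w.rotate x hxs).edges.Perm w.edges := (w.rotate_edges x hxs).perm
      have hcyc' : (w.rotate x hxs).IsCycle := hw.rotate hxs
      have hew' : s(x, y) ∈ (w.rotate x hxs).edges := hperm.mem_iff.mpr hew
      have hothers' : ∀ e' ∈ (w.rotate x hxs).edges, e' ≠ s(x, y) →
          ∀ he2 : e' ∈ G.edgeSet, c ⟨e', he2⟩ = !b := by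
        intro e' he' hne he2
        exact hothers e' (hperm.mem_iff.mp he') hne he2
      set w' := w.rotate x hxs with hw'def
      clear_value w'
      clear hw'def hperm hothers hew hxs hw
      cases w' with
      | nil => exact absurd rfl hcyc'.ne_nil
      | @cons _ z _ h1 q =>
        obtain ⟨hqpath, hqe⟩ := (SimpleGraph.Walk.cons_isCycle_iff q h1).mp hcyc'
        by_cases hfirst : s(x, z) = s(x, y)
        · have hz : y = z := (Sym2.congr_right.mp hfirst).symm
          subst hz
          have hqcol : ∀ e' ∈ q.edges, ∀ he2 : e' ∈ G.edgeSet, c ⟨e', he2⟩ = !b := by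
            intro e' he' he2
            refine hothers' e' (by simp [he']) ?_ he2
            rintro rfl; exact hqe he'
          have hreach : (colSub G c (!b)).Reachable y x :=
            reach_colSub_of_walk q (fun e' he' => hqcol e' he' _)
          have : c ⟨s(x, y), hadj⟩ = b := hecol
          exact hg hadj (by rw [this]; exact hreach.symm)
        · have heq : s(x, y) ∈ q.edges := by
            rw [SimpleGraph.Walk.edges_cons, List.mem_cons] at hew'
            exact hew'.resolve_left (fun h' => hfirst h'.symm)
          -- reverse of q is a path from x, with s(x,y) among its edges
          have hqr : q.reverse.IsPath := hqpath.reverse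
          have heqr : s(x, y) ∈ q.reverse.edges := by
            rw [SimpleGraph.Walk.edges_reverse]
            rw [List.mem_reverse]
            exact heq
          cases hqrw : q.reverse with
          | nil =>
            rw [hqrw] at heqr; simp at heqr
          | @cons _ z2 _ h2 r =>
            rw [hqrw] at heqr hqr
            by_cases hsec : s(x, z2) = s(x, y)
            · have hz2 : y = z2 := (Sym2.congr_right.mp hsec).symm
              subst hz2
              -- we use: cons h1 r.reverse : Walk x y?  h1 : Adj x z, r.reverse : Walk z y
              have hrnodup : s(x, y) ∉ r.edges := by
                have := hqr.edges_nodup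
                simp only [SimpleGraph.Walk.edges_cons] at this
                rw [List.nodup_cons] at this
                exact this.1
              have hrsub : ∀ e' ∈ r.edges, e' ∈ q.edges := by
                intro e' he'
                have : e' ∈ q.reverse.edges := by rw [hqrw]; simp [he']
                rw [SimpleGraph.Walk.edges_reverse, List.mem_reverse] at this
                exact this
              have hcol2 : ∀ e' ∈ (SimpleGraph.Walk.cons h1 r.reverse).edges,
                  ∀ he2 : e' ∈ G.edgeSet, c ⟨e', he2⟩ = !b := by
                intro e' he' he2
                simp only [SimpleGraph.Walk.edges_cons, List.mem_cons] at he'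
                rcases he' with rfl | he'
                · exact hothers' _ (by simp) hfirst he2
                · rw [SimpleGraph.Walk.edges_reverse, List.mem_reverse] at he'
                  refine hothers' e' (by simp [hrsub e' he']) ?_ he2
                  rintro rfl; exact hrnodup he'
              have hreach : (colSub G c (!b)).Reachable x y :=
                reach_colSub_of_walk (SimpleGraph.Walk.cons h1 r.reverse)
                  (fun e' he' => hcol2 e' he' _)
              have : c ⟨s(x, y), hadj⟩ = b := hecol
              exact hg hadj (by rw [this]; exact hreach)
            · have : s(x, y) ∈ r.edges := by
                rcases (List.mem_cons).mp heqr with h' | h'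
                · exact absurd h'.symm hsec
                · exact h'
              have hxr : x ∈ r.support := SimpleGraph.Walk.fst_mem_support_of_mem_edges r this
              have := (SimpleGraph.Walk.cons_isPath_iff h2 r).mp hqr
              exact this.2 hxr
    exact ⟨key true, key false⟩

end NAC

namespace NAC

/-- The graph obtained by gluing `k` copies of `H` along the edge `uv`: the two shared
vertices are `Sum.inl false` (for `u`) and `Sum.inl true` (for `v`); `Sum.inr (i, s)` is
the copy of the vertex `s ∉ {u, v}` in the `i`-th copy of `H`. -/
def glueCopies (H : SimpleGraph V) (u v : V) (k : ℕ) :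
    SimpleGraph (Bool ⊕ (Fin k × {w : V // w ≠ u ∧ w ≠ v})) where
  Adj x y :=
    match x, y with
    | .inl a, .inl b => a ≠ b ∧ H.Adj u v
    | .inl a, .inr (_, s) => H.Adj (if a then v else u) s.1
    | .inr (_, s), .inl a => H.Adj s.1 (if a then v else u)
    | .inr (i, s), .inr (j, t) => i = j ∧ H.Adj s.1 t.1
  symm := by
    refine ⟨?_⟩
    rintro (a | ⟨i, s⟩) (b | ⟨j, t⟩) h
    · exact ⟨h.1.symm, h.2⟩
    · exact h.symm
    · exact h.symm
    · exact ⟨h.1.symm, h.2.symm⟩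
  loopless := by
    refine ⟨?_⟩
    rintro (a | ⟨i, s⟩) h
    · exact h.1 rfl
    · exact H.irrefl h.2

end NAC

namespace NAC

variable {V : Type*}

section Glue

variable {u v : V} {k : ℕ}

/-- The embedding of the `i`-th copy. -/
noncomputable def ι (u v : V) (k : ℕ) (i : Fin k) (w : V) : Bool ⊕ (Fin k × {w : V // w ≠ u ∧ w ≠ v}) :=
  if h1 : w = u then .inl false else if h2 : w = v then .inl true
  else .inr (i, ⟨w, h1, h2⟩)

lemma iota_u (i : Fin k) : ι u v k i u = .inl false := dif_pos rfl

lemma iota_v (hne : u ≠ v) (i : Fin k) : ι u v k i v = .inl true := by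
  rw [ι, dif_neg (Ne.symm hne), dif_pos rfl]

lemma iota_other (i : Fin k) {w : V} (h1 : w ≠ u) (h2 : w ≠ v) :
    ι u v k i w = .inr (i, ⟨w, h1, h2⟩) := by
  rw [ι, dif_neg h1, dif_neg h2]

variable {H : SimpleGraph V}

lemma glue_adj_iota (huv : H.Adj u v) (i : Fin k) {a b : V} (h : H.Adj a b) :
    (glueCopies H u v k).Adj (ι u v k i a) (ι u v k i b) := by
  have hne : u ≠ v := huv.ne
  by_cases ha1 : a = u
  · by_cases hb1 : b = u
    · rw [ha1, hb1] at h; exact absurd h H.irrefl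
    by_cases hb2 : b = v
    · rw [ha1, hb2, iota_u, iota_v hne]
      exact ⟨by simp, huv⟩
    · rw [ha1, iota_u, iota_other i hb1 hb2]
      exact (ha1 ▸ h : H.Adj u b)
  by_cases ha2 : a = v
  · by_cases hb1 : b = u
    · rw [ha2, hb1, iota_v hne, iota_u]
      exact ⟨by simp, huv⟩
    by_cases hb2 : b = v
    · rw [ha2, hb2] at h; exact absurd h H.irrefl
    · rw [ha2, iota_v hne, iota_other i hb1 hb2]
      exact (ha2 ▸ h : H.Adj v b)
  · rw [iota_other i ha1 ha2]
    by_cases hb1 : b = u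
    · rw [hb1, iota_u]; exact (hb1 ▸ h : H.Adj a u)
    by_cases hb2 : b = v
    · rw [hb2, iota_v hne]; exact (hb2 ▸ h : H.Adj a v)
    · rw [iota_other i hb1 hb2]
      exact ⟨rfl, h⟩

lemma glue_adj_iota_rev (huv : H.Adj u v) (i : Fin k) {a b : V}
    (h : (glueCopies H u v k).Adj (ι u v k i a) (ι u v k i b)) : H.Adj a b := by
  have hne : u ≠ v := huv.ne
  by_cases ha1 : a = u
  · by_cases hb1 : b = u
    · rw [ha1, hb1, iota_u] at h
      exact absurd h (glueCopies H u v k).irrefl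
    by_cases hb2 : b = v
    · rw [ha1, hb2]; exact huv
    · rw [ha1, iota_u, iota_other i hb1 hb2] at h
      rw [ha1]; exact h
  by_cases ha2 : a = v
  · by_cases hb1 : b = u
    · rw [ha2, hb1]; exact huv.symm
    by_cases hb2 : b = v
    · rw [ha2, hb2, iota_v hne] at h
      exact absurd h (glueCopies H u v k).irrefl
    · rw [ha2, iota_v hne, iota_other i hb1 hb2] at h
      rw [ha2]; exact h
  · rw [iota_other i ha1 ha2] at h
    by_cases hb1 : b = u
    · rw [hb1, iota_u] at h; rw [hb1]; exact h
    by_cases hb2 : b = v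
    · rw [hb2, iota_v hne] at h; rw [hb2]; exact h
    · rw [iota_other i hb1 hb2] at h
      exact h.2

lemma map_mem_glue (huv : H.Adj u v) (i : Fin k) {e : Sym2 V} (he : e ∈ H.edgeSet) :
    e.map (ι u v k i) ∈ (glueCopies H u v k).edgeSet := by
  revert he
  refine Sym2.ind (fun a b he => ?_) e
  rw [Sym2.map_pair_eq, SimpleGraph.mem_edgeSet]
  exact glue_adj_iota huv i he

/-- The restriction of a colouring of the glued graph to the `i`-th copy. -/
noncomputable def res (huv : H.Adj u v) (c : (glueCopies H u v k).edgeSet → Bool)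
    (i : Fin k) : H.edgeSet → Bool :=
  fun e => c ⟨e.1.map (ι u v k i), map_mem_glue huv i e.2⟩

lemma res_apply (huv : H.Adj u v) (c : (glueCopies H u v k).edgeSet → Bool) (i : Fin k)
    {a b : V} (hab : H.Adj a b) (h2 : (glueCopies H u v k).Adj (ι u v k i a) (ι u v k i b)) :
    res huv c i ⟨s(a, b), hab⟩ = c ⟨s(ι u v k i a, ι u v k i b), h2⟩ := rfl


lemma shared_mem (huv : H.Adj u v) :
    s((Sum.inl false : Bool ⊕ (Fin k × {w : V // w ≠ u ∧ w ≠ v})), Sum.inl true) ∈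
      (glueCopies H u v k).edgeSet := by
  rw [SimpleGraph.mem_edgeSet]
  exact ⟨by simp, huv⟩

lemma res_uv (huv : H.Adj u v) (c : (glueCopies H u v k).edgeSet → Bool) (j : Fin k) :
    res huv c j ⟨s(u, v), huv⟩ = c ⟨_, shared_mem huv⟩ := by
  rw [res_apply huv c j huv (glue_adj_iota huv j huv)]
  congr 1
  refine Subtype.ext ?_
  show s(ι u v k j u, ι u v k j v) = s(Sum.inl false, Sum.inl true)
  rw [iota_u, iota_v huv.ne]

lemma inl_pair_eq {a a' : Bool} (h : a ≠ a') :
    s((Sum.inl a : Bool ⊕ (Fin k × {w : V // w ≠ u ∧ w ≠ v})), Sum.inl a') =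
      s((Sum.inl false : Bool ⊕ (Fin k × {w : V // w ≠ u ∧ w ≠ v})), Sum.inl true) := by
  cases a <;> cases a' <;> simp_all [Sym2.eq_swap]

lemma adj_rep (huv : H.Adj u v) (hk : 1 ≤ k) {x y : Bool ⊕ (Fin k × {w : V // w ≠ u ∧ w ≠ v})}
    (hadj : (glueCopies H u v k).Adj x y) :
    ∃ (i : Fin k) (a b : V) (_ : H.Adj a b), x = ι u v k i a ∧ y = ι u v k i b := by
  have hne : u ≠ v := huv.ne
  match x, y with
  | .inl a, .inl a' =>
    obtain ⟨haa, -⟩ := hadj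
    cases a <;> cases a'
    · exact absurd rfl haa
    · exact ⟨⟨0, hk⟩, u, v, huv, (iota_u _).symm, (iota_v hne _).symm⟩
    · exact ⟨⟨0, hk⟩, v, u, huv.symm, (iota_v hne _).symm, (iota_u _).symm⟩
    · exact absurd rfl haa
  | .inl a, .inr (j, t) =>
    cases a
    · exact ⟨j, u, t.1, hadj, (iota_u _).symm, (iota_other j t.2.1 t.2.2).symm⟩
    · exact ⟨j, v, t.1, hadj, (iota_v hne _).symm, (iota_other j t.2.1 t.2.2).symm⟩
  | .inr (j, t), .inl a =>
    cases a
    · exact ⟨j, t.1, u, hadj, (iota_other j t.2.1 t.2.2).symm, (iota_u _).symm⟩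
    · exact ⟨j, t.1, v, hadj, (iota_other j t.2.1 t.2.2).symm, (iota_v hne _).symm⟩
  | .inr (j, t), .inr (j', t') =>
    obtain ⟨rfl, h2⟩ := hadj
    exact ⟨j, t.1, t'.1, h2, (iota_other j t.2.1 t.2.2).symm, (iota_other j t'.2.1 t'.2.2).symm⟩

lemma good_res_of_good (huv : H.Adj u v) {c : (glueCopies H u v k).edgeSet → Bool}
    (h : Good (glueCopies H u v k) c) (i : Fin k) : Good H (res huv c i) := by
  intro x y hxy hre
  have hGadj := glue_adj_iota huv i hxy
  refine h hGadj ?_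
  have : res huv c i ⟨s(x, y), hxy⟩ = c ⟨s(ι u v k i x, ι u v k i y), hGadj⟩ :=
    res_apply huv c i hxy hGadj
  rw [← this]
  obtain ⟨w⟩ := hre
  refine reach_of_walk (ι u v k i) (fun a b hab => ?_) w
  obtain ⟨hadj, hc⟩ := hab
  have hGab := glue_adj_iota huv i hadj
  have : (colSub (glueCopies H u v k) c (!(res huv c i ⟨s(x, y), hxy⟩))).Adj
      (ι u v k i a) (ι u v k i b) := ⟨hGab, by rw [← res_apply huv c i hadj hGab]; exact hc⟩
  exact this.reachable

section RFun

variable (huv : H.Adj u v) (c : (glueCopies H u v k).edgeSet → Bool) (b' : Bool) (i : Fin k)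

/-- Copy-`i` representative, used when no copy joins `u` and `v` in colour `b'`. -/
noncomputable def rfun1 : Bool ⊕ (Fin k × {w : V // w ≠ u ∧ w ≠ v}) → V
  | .inl false => u
  | .inl true => v
  | .inr (j, s) => if j = i then s.1
      else if (colSub H (res huv c j) b').Reachable s.1 v then v else u

/-- Copy-`i` representative, used when the shared edge has colour `b'`. -/
noncomputable def rfun2' (_huv : H.Adj u v) (i : Fin k) :
    Bool ⊕ (Fin k × {w : V // w ≠ u ∧ w ≠ v}) → V
  | .inl false => u
  | .inl true => v
  | .inr (j, s) => if j = i then s.1 else u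

lemma rfun1_iota (a : V) : rfun1 huv c b' i (ι u v k i a) = a := by
  by_cases h1 : a = u
  · rw [h1, iota_u]; rfl
  by_cases h2 : a = v
  · rw [h2, iota_v huv.ne]; rfl
  · rw [iota_other i h1 h2]
    simp [rfun1]

lemma rfun2_iota (a : V) : rfun2' huv i (ι u v k i a) = a := by
  by_cases h1 : a = u
  · rw [h1, iota_u]; rfl
  by_cases h2 : a = v
  · rw [h2, iota_v huv.ne]; rfl
  · rw [iota_other i h1 h2]
    simp [rfun2']

/-- In copy `j`, a `colSub`-edge of the glued graph between `inl a` and `inr (j, t)`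
yields a `colSub`-edge of `H` between the corresponding vertex and `t`. -/
lemma cross_edge {a : Bool} {j : Fin k} {t : {w : V // w ≠ u ∧ w ≠ v}}
    (h : (colSub (glueCopies H u v k) c b').Adj (Sum.inl a) (Sum.inr (j, t))) :
    (colSub H (res huv c j) b').Adj (if a then v else u) t.1 := by
  obtain ⟨hadj, hcol⟩ := h
  have hadj' : H.Adj (if a then v else u) t.1 := hadj
  refine ⟨hadj', ?_⟩
  have hG := glue_adj_iota huv j hadj'
  rw [res_apply huv c j hadj' hG]
  have : (⟨s(ι u v k j (if a then v else u), ι u v k j t.1), hG⟩ :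
      (glueCopies H u v k).edgeSet) = ⟨s(Sum.inl a, Sum.inr (j, t)), hadj⟩ := by
    refine Subtype.ext ?_
    show s(ι u v k j (if a then v else u), ι u v k j t.1) = s(Sum.inl a, Sum.inr (j, t))
    cases a
    · rw [if_neg (by simp), iota_u, iota_other j t.2.1 t.2.2]
    · rw [if_pos rfl, iota_v huv.ne, iota_other j t.2.1 t.2.2]
  rw [this]
  exact hcol

/-- In copy `j`, an internal `colSub`-edge pulls back. -/
lemma internal_edge {j : Fin k} {s t : {w : V // w ≠ u ∧ w ≠ v}}
    (h : (colSub (glueCopies H u v k) c b').Adj (Sum.inr (j, s)) (Sum.inr (j, t))) :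
    (colSub H (res huv c j) b').Adj s.1 t.1 := by
  obtain ⟨hadj, hcol⟩ := h
  have hadj' : H.Adj s.1 t.1 := hadj.2
  refine ⟨hadj', ?_⟩
  have hG := glue_adj_iota huv j hadj'
  rw [res_apply huv c j hadj' hG]
  have : (⟨s(ι u v k j s.1, ι u v k j t.1), hG⟩ :
      (glueCopies H u v k).edgeSet) = ⟨s(Sum.inr (j, s), Sum.inr (j, t)), hadj⟩ := by
    refine Subtype.ext ?_
    show s(ι u v k j s.1, ι u v k j t.1) = s(Sum.inr (j, s), Sum.inr (j, t))
    rw [iota_other j s.2.1 s.2.2, iota_other j t.2.1 t.2.2]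
  rw [this]
  exact hcol

/-- A `colSub`-edge between the two shared vertices makes `u, v` adjacent in every copy. -/
lemma shared_edge {a a' : Bool}
    (h : (colSub (glueCopies H u v k) c b').Adj (Sum.inl a) (Sum.inl a')) (j : Fin k) :
    (colSub H (res huv c j) b').Adj u v := by
  obtain ⟨hadj, hcol⟩ := h
  refine ⟨huv, ?_⟩
  rw [res_uv huv c j]
  have : (⟨_, shared_mem huv⟩ : (glueCopies H u v k).edgeSet) =
      ⟨s(Sum.inl a, Sum.inl a'), hadj⟩ := Subtype.ext (inl_pair_eq hadj.1).symm
  rw [this]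
  exact hcol

lemma rfun1_edge (N : ∀ j, ¬ (colSub H (res huv c j) b').Reachable u v) :
    ∀ ⦃x y⦄, (colSub (glueCopies H u v k) c b').Adj x y →
      (colSub H (res huv c i) b').Reachable (rfun1 huv c b' i x) (rfun1 huv c b' i y) := by
  have main : ∀ (a : Bool) (j : Fin k) (t : {w : V // w ≠ u ∧ w ≠ v}),
      (colSub (glueCopies H u v k) c b').Adj (Sum.inl a) (Sum.inr (j, t)) →
      (colSub H (res huv c i) b').Reachable (rfun1 huv c b' i (Sum.inl a))
        (rfun1 huv c b' i (Sum.inr (j, t))) := by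
    intro a j t h
    have hE := cross_edge huv c b' h
    by_cases hji : j = i
    · subst hji
      have : rfun1 huv c b' j (Sum.inr (j, t)) = t.1 := by simp [rfun1]
      rw [this]
      cases a
      · exact hE.reachable
      · exact hE.reachable
    · cases a
      · -- edge u - t in copy j
        have hnr : ¬ (colSub H (res huv c j) b').Reachable t.1 v := by
          intro hr
          exact N j (hE.reachable.trans hr)
        have : rfun1 huv c b' i (Sum.inr (j, t)) = u := by simp [rfun1, hji, hnr]
        rw [this]
        exact SimpleGraph.Reachable.refl u
      · -- edge v - t in copy j
        have hr : (colSub H (res huv c j) b').Reachable t.1 v := hE.symm.reachable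
        have : rfun1 huv c b' i (Sum.inr (j, t)) = v := by simp [rfun1, hji, hr]
        rw [this]
        exact SimpleGraph.Reachable.refl v
  rintro (a | ⟨j, s⟩) (a' | ⟨j', t⟩) h
  · exact absurd (shared_edge huv c b' h i).reachable (N i)
  · exact main a j' t h
  · exact (main a' j s h.symm).symm
  · have h2 := h
    obtain ⟨hadj, -⟩ := h2
    obtain ⟨rfl, -⟩ := hadj
    have hE := internal_edge huv c b' h
    by_cases hji : j = i
    · subst hji
      simpa [rfun1] using hE.reachable
    · have : (colSub H (res huv c j) b').Reachable s.1 v ↔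
          (colSub H (res huv c j) b').Reachable t.1 v :=
        ⟨fun hr => hE.symm.reachable.trans hr, fun hr => hE.reachable.trans hr⟩
      by_cases hrv : (colSub H (res huv c j) b').Reachable s.1 v
      · have e1 : rfun1 huv c b' i (Sum.inr (j, s)) = v := by simp [rfun1, hji, hrv]
        have e2 : rfun1 huv c b' i (Sum.inr (j, t)) = v := by simp [rfun1, hji, this.mp hrv]
        rw [e1, e2]
      · have e1 : rfun1 huv c b' i (Sum.inr (j, s)) = u := by simp [rfun1, hji, hrv]
        have e2 : rfun1 huv c b' i (Sum.inr (j, t)) = u := by simp [rfun1, hji, this.not.mp hrv]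
        rw [e1, e2]

lemma rfun2_edge (hsh : c ⟨_, shared_mem huv⟩ = b') :
    ∀ ⦃x y⦄, (colSub (glueCopies H u v k) c b').Adj x y →
      (colSub H (res huv c i) b').Reachable (rfun2' huv i x) (rfun2' huv i y) := by
  have huvc : ∀ j, (colSub H (res huv c j) b').Adj u v := by
    intro j
    refine ⟨huv, ?_⟩
    rw [res_uv huv c j]
    exact hsh
  have main : ∀ (a : Bool) (j : Fin k) (t : {w : V // w ≠ u ∧ w ≠ v}),
      (colSub (glueCopies H u v k) c b').Adj (Sum.inl a) (Sum.inr (j, t)) →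
      (colSub H (res huv c i) b').Reachable (rfun2' huv i (Sum.inl a))
        (rfun2' huv i (Sum.inr (j, t))) := by
    intro a j t h
    have hE := cross_edge huv c b' h
    by_cases hji : j = i
    · subst hji
      have : rfun2' huv j (Sum.inr (j, t)) = t.1 := by simp [rfun2']
      rw [this]
      cases a
      · exact hE.reachable
      · exact hE.reachable
    · have hry : rfun2' huv i (Sum.inr (j, t)) = u := by simp [rfun2', hji]
      rw [hry]
      cases a
      · exact SimpleGraph.Reachable.refl u
      · exact (huvc i).reachable.symm
  rintro (a | ⟨j, s⟩) (a' | ⟨j', t⟩) h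
  · have h2 := h
    obtain ⟨hadj, -⟩ := h2
    cases a <;> cases a'
    · exact absurd rfl hadj.1
    · exact (huvc i).reachable
    · exact (huvc i).reachable.symm
    · exact absurd rfl hadj.1
  · exact main a j' t h
  · exact (main a' j s h.symm).symm
  · have h2 := h
    obtain ⟨hadj, -⟩ := h2
    obtain ⟨rfl, -⟩ := hadj
    have hE := internal_edge huv c b' h
    by_cases hji : j = i
    · subst hji
      simpa [rfun2'] using hE.reachable
    · have e1 : rfun2' huv i (Sum.inr (j, s)) = u := by simp [rfun2', hji]
      have e2 : rfun2' huv i (Sum.inr (j, t)) = u := by simp [rfun2', hji]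
      rw [e1, e2]

end RFun

lemma good_of_good_res (huv : H.Adj u v) (hk : 1 ≤ k)
    {c : (glueCopies H u v k).edgeSet → Bool}
    (hall : ∀ i, Good H (res huv c i)) : Good (glueCopies H u v k) c := by
  intro x y hadj hre
  obtain ⟨i, a, b, hab, rfl, rfl⟩ := adj_rep huv hk hadj
  have hcolv : c ⟨s(ι u v k i a, ι u v k i b), hadj⟩ = res huv c i ⟨s(a, b), hab⟩ :=
    (res_apply huv c i hab hadj).symm
  rw [hcolv] at hre
  set bb := res huv c i ⟨s(a, b), hab⟩ with hbb
  by_cases hsh : c ⟨_, shared_mem huv⟩ = !bb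
  · obtain ⟨w⟩ := hre
    have h2 := reach_of_walk (rfun2' huv i) (rfun2_edge huv c (!bb) i hsh) w
    rw [rfun2_iota, rfun2_iota] at h2
    exact hall i hab h2
  · by_cases hT : ∃ j, (colSub H (res huv c j) (!bb)).Reachable u v
    · obtain ⟨j, hj⟩ := hT
      have hcsh : c ⟨_, shared_mem huv⟩ = bb := by
        revert hsh; cases hhh : c ⟨_, shared_mem huv⟩ <;> cases bb <;> simp
      have : res huv c j ⟨s(u, v), huv⟩ = bb := by rw [res_uv huv c j]; exact hcsh
      refine hall j huv ?_
      rw [this]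
      exact hj
    · push_neg at hT
      obtain ⟨w⟩ := hre
      have h1 := reach_of_walk (rfun1 huv c (!bb) i) (rfun1_edge huv c (!bb) i hT) w
      rw [rfun1_iota, rfun1_iota] at h1
      exact hall i hab h1


lemma edge_rep (huv : H.Adj u v) (hk : 1 ≤ k) {E : Sym2 (Bool ⊕ (Fin k × {w : V // w ≠ u ∧ w ≠ v}))}
    (hE : E ∈ (glueCopies H u v k).edgeSet) :
    ∃ (i : Fin k) (e : H.edgeSet), E = Sym2.map (ι u v k i) e.1 := by
  revert hE
  refine Sym2.ind (fun x y hE => ?_) E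
  obtain ⟨i, a, b, hab, hx, hy⟩ := adj_rep huv hk (show (glueCopies H u v k).Adj x y from hE)
  subst hx; subst hy
  exact ⟨i, ⟨s(a, b), hab⟩, rfl⟩

lemma surj_iff (huv : H.Adj u v) (hk : 1 ≤ k) {c : (glueCopies H u v k).edgeSet → Bool} :
    Function.Surjective c ↔ ∃ i, Function.Surjective (res huv c i) := by
  constructor
  · intro hs
    set b0 := c ⟨_, shared_mem huv⟩ with hb0
    obtain ⟨E, hEc⟩ := hs (!b0)
    obtain ⟨i, e, hrep⟩ := edge_rep huv hk E.2
    refine ⟨i, fun bb => ?_⟩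
    have h1 : res huv c i e = !b0 := by
      show c ⟨e.1.map (ι u v k i), _⟩ = !b0
      rw [← hEc]
      congr 1
      exact Subtype.ext hrep.symm
    have h2 : res huv c i ⟨s(u, v), huv⟩ = b0 := res_uv huv c i
    rcases Bool.eq_or_eq_not bb b0 with rfl | rfl
    · exact ⟨_, h2⟩
    · exact ⟨_, h1⟩
  · rintro ⟨i, hi⟩ b
    obtain ⟨e, he⟩ := hi b
    exact ⟨⟨e.1.map (ι u v k i), map_mem_glue huv i e.2⟩, he⟩

lemma res_eq_all (huv : H.Adj u v) (hk : 1 ≤ k) {c c' : (glueCopies H u v k).edgeSet → Bool}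
    (h : ∀ i, res huv c i = res huv c' i) : c = c' := by
  funext E
  obtain ⟨i, e, hrep⟩ := edge_rep huv hk E.2
  have hsub : E = ⟨e.1.map (ι u v k i), map_mem_glue huv i e.2⟩ := Subtype.ext hrep
  rw [hsub]
  exact congrFun (h i) e

lemma iota_eq {i j : Fin k} {a b : V} (hne : u ≠ v) (h : ι u v k i a = ι u v k j b) :
    a = b ∧ (i = j ∨ a = u ∨ a = v) := by
  by_cases ha1 : a = u
  · by_cases hb1 : b = u
    · exact ⟨ha1.trans hb1.symm, Or.inr (Or.inl ha1)⟩
    by_cases hb2 : b = v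
    · rw [ha1, hb2, iota_u, iota_v hne] at h
      simp at h
    · rw [ha1, iota_u, iota_other j hb1 hb2] at h
      simp at h
  by_cases ha2 : a = v
  · by_cases hb1 : b = u
    · rw [ha2, hb1, iota_v hne, iota_u] at h
      simp at h
    by_cases hb2 : b = v
    · exact ⟨ha2.trans hb2.symm, Or.inr (Or.inr ha2)⟩
    · rw [ha2, iota_v hne, iota_other j hb1 hb2] at h
      simp at h
  · rw [iota_other i ha1 ha2] at h
    by_cases hb1 : b = u
    · rw [hb1, iota_u] at h; simp at h
    by_cases hb2 : b = v
    · rw [hb2, iota_v hne] at h; simp at h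
    · rw [iota_other j hb1 hb2] at h
      obtain ⟨h1, h2⟩ := Prod.mk.injEq .. ▸ Sum.inr.inj h
      exact ⟨congrArg Subtype.val h2, Or.inl h1⟩

/-- The only edge shared between distinct copies is the glued edge `uv`. -/
lemma rep_unique (huv : H.Adj u v) {d : Fin k → H.edgeSet → Bool}
    (hag : ∀ i j, d i ⟨s(u, v), huv⟩ = d j ⟨s(u, v), huv⟩) {i j : Fin k} {e e' : Sym2 V}
    (he : e ∈ H.edgeSet) (he' : e' ∈ H.edgeSet)
    (h : Sym2.map (ι u v k i) e = Sym2.map (ι u v k j) e') :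
    d i ⟨e, he⟩ = d j ⟨e', he'⟩ := by
  have hne : u ≠ v := huv.ne
  revert he he' h
  refine Sym2.ind (fun a b => ?_) e
  refine Sym2.ind (fun a' b' => ?_) e'
  intro he he' h
  rw [Sym2.map_pair_eq, Sym2.map_pair_eq, Sym2.eq_iff] at h
  have main : ∀ (a' b' : V) (he' : s(a', b') ∈ H.edgeSet),
      ι u v k i a = ι u v k j a' → ι u v k i b = ι u v k j b' →
      d i ⟨s(a, b), he⟩ = d j ⟨s(a', b'), he'⟩ := by
    intro a' b' he' h1 h2
    obtain ⟨rfl, hc1⟩ := iota_eq hne h1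
    obtain ⟨rfl, hc2⟩ := iota_eq hne h2
    by_cases hij : i = j
    · rw [hij]
    · have ha : a = u ∨ a = v := hc1.resolve_left hij
      have hb : b = u ∨ b = v := hc2.resolve_left hij
      have hadj2 : H.Adj a b := he
      have hsym : s(a, b) = s(u, v) := by
        rcases ha with rfl | rfl
        · rcases hb with rfl | rfl
          · exact absurd rfl hadj2.ne
          · rfl
        · rcases hb with rfl | rfl
          · exact Sym2.eq_swap
          · exact absurd rfl hadj2.ne
      have e1 : (⟨s(a, b), he⟩ : H.edgeSet) = ⟨s(u, v), huv⟩ := Subtype.ext hsym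
      have e2 : (⟨s(a, b), he'⟩ : H.edgeSet) = ⟨s(u, v), huv⟩ := Subtype.ext hsym
      simp only [e1, e2]
      exact hag i j
  rcases h with ⟨h1, h2⟩ | ⟨h1, h2⟩
  · exact main a' b' he' h1 h2
  · have he'' : s(b', a') ∈ H.edgeSet := by rwa [Sym2.eq_swap]
    have := main b' a' he'' h1 h2
    rw [this]
    congr 1
    exact Subtype.ext Sym2.eq_swap

/-- Glue a compatible family of colourings into a colouring of the glued graph. -/
noncomputable def glueCol (huv : H.Adj u v) (hk : 1 ≤ k) (d : Fin k → H.edgeSet → Bool) :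
    (glueCopies H u v k).edgeSet → Bool := fun E =>
  d (edge_rep huv hk E.2).choose (edge_rep huv hk E.2).choose_spec.choose

lemma res_glueCol (huv : H.Adj u v) (hk : 1 ≤ k) {d : Fin k → H.edgeSet → Bool}
    (hag : ∀ i j, d i ⟨s(u, v), huv⟩ = d j ⟨s(u, v), huv⟩) (i : Fin k) :
    res huv (glueCol huv hk d) i = d i := by
  funext e
  show glueCol huv hk d ⟨e.1.map (ι u v k i), map_mem_glue huv i e.2⟩ = d i e
  unfold glueCol
  generalize_proofs h1 h2
  have hprop := h2.choose_spec.choose_spec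
  exact rep_unique huv hag _ _ (hprop.symm : _)


end Glue

section Count

variable {Γ : SimpleGraph V}

lemma not_surj_const {d : Γ.edgeSet → Bool} (h : ¬ Function.Surjective d)
    (e e' : Γ.edgeSet) : d e = d e' := by
  rw [Function.Surjective] at h
  push_neg at h
  obtain ⟨b, hb⟩ := h
  have key : ∀ f : Γ.edgeSet, d f = !b := by
    intro f
    cases hdf : d f <;> cases b <;> simp_all [hb f]
  rw [key e, key e']

lemma good_const {d : Γ.edgeSet → Bool} (h : ∀ e e', d e = d e') : Good Γ d := by
  intro x y hxy hre
  obtain ⟨w⟩ := hre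
  cases w with
  | nil => exact hxy.ne rfl
  | @cons _ z _ hadj p =>
    obtain ⟨h1, hcol⟩ := hadj
    rw [h ⟨s(x, z), h1⟩ ⟨s(x, y), hxy⟩] at hcol
    simp at hcol

/-- Flipping the two colours. -/
def flipc (c : Γ.edgeSet → Bool) : Γ.edgeSet → Bool := fun e => !(c e)

lemma flipc_invol : Function.Involutive (flipc (Γ := Γ)) := fun c => by
  funext e; simp [flipc]

lemma cCount_flip (c : Γ.edgeSet → Bool) (b : Bool) (l : List (Sym2 V)) :
    cCount Γ (flipc c) b l = cCount Γ c (!b) l := by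
  unfold cCount
  congr 1
  apply List.filter_congr
  intro e _
  apply decide_eq_decide.mpr
  constructor
  · rintro ⟨h, hc⟩
    refine ⟨h, by rw [← hc]; simp [flipc]⟩
  · rintro ⟨h, hc⟩
    exact ⟨h, by rw [flipc, hc, Bool.not_not]⟩

lemma isNAC_flip {c : Γ.edgeSet → Bool} (h : IsNAC Γ c) : IsNAC Γ (flipc c) := by
  obtain ⟨hs, hcyc⟩ := h
  constructor
  · intro b
    obtain ⟨e, he⟩ := hs (!b)
    exact ⟨e, by simp [flipc, he]⟩
  · intro x w hw
    refine ⟨?_, ?_⟩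
    · rw [cCount_flip]
      exact (hcyc w hw).2
    · rw [cCount_flip]
      exact (hcyc w hw).1

end Count

section Count2

variable {u v : V} {H : SimpleGraph V}

/-- NAC-colourings with a given colour on the edge `uv`. -/
def NACb (huv : H.Adj u v) (b : Bool) : Set (H.edgeSet → Bool) :=
  {c | IsNAC H c ∧ c ⟨s(u, v), huv⟩ = b}

lemma flip_NACb (huv : H.Adj u v) (b : Bool) :
    flipc '' NACb huv b = NACb huv (!b) := by
  ext c
  constructor
  · rintro ⟨d, ⟨hd1, hd2⟩, rfl⟩
    exact ⟨isNAC_flip hd1, by simp [flipc, hd2]⟩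
  · rintro ⟨h1, h2⟩
    refine ⟨flipc c, ⟨isNAC_flip h1, by simp [flipc, h2]⟩, flipc_invol c⟩

variable [Fintype V]

lemma ncard_NACb (huv : H.Adj u v) (b : Bool) : (NACb huv b).ncard = nacNum H := by
  have h1 : (NACb huv true).ncard = (NACb huv false).ncard := by
    have hfl := flip_NACb huv true
    rw [Bool.not_true] at hfl
    rw [← hfl, Set.ncard_image_of_injective _ flipc_invol.injective]
  have h2 : {c : H.edgeSet → Bool | IsNAC H c} = NACb huv true ∪ NACb huv false := by
    ext c
    constructor
    · intro hc
      cases hcv : c ⟨s(u, v), huv⟩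
      · exact Or.inr ⟨hc, hcv⟩
      · exact Or.inl ⟨hc, hcv⟩
    · rintro (⟨hc, -⟩ | ⟨hc, -⟩) <;> exact hc
  have hdisj : Disjoint (NACb huv true) (NACb huv false) := by
    rw [Set.disjoint_left]
    rintro c ⟨-, h1⟩ ⟨-, h2⟩
    rw [h1] at h2
    exact Bool.noConfusion h2
  have h3 : nacNum H = (NACb huv true).ncard := by
    rw [nacNum, h2, Set.ncard_union_eq hdisj, ← h1]
    omega
  cases b
  · rw [h3, h1]
  · rw [h3]

/-- Good colourings of `H` with a given colour on `uv`. -/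
def Ab (huv : H.Adj u v) (b : Bool) : Set (H.edgeSet → Bool) :=
  {c | Good H c ∧ c ⟨s(u, v), huv⟩ = b}

lemma Ab_eq (huv : H.Adj u v) (b : Bool) :
    Ab huv b = insert (fun _ => b) (NACb huv b) := by
  ext c
  constructor
  · rintro ⟨hg, hv⟩
    by_cases hs : Function.Surjective c
    · exact Set.mem_insert_iff.mpr (Or.inr ⟨isNAC_iff.mpr ⟨hs, hg⟩, hv⟩)
    · refine Set.mem_insert_iff.mpr (Or.inl ?_)
      funext e
      rw [not_surj_const hs e ⟨s(u, v), huv⟩, hv]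
  · intro hc
    rcases Set.mem_insert_iff.mp hc with rfl | ⟨h1, h2⟩
    · exact ⟨good_const (fun _ _ => rfl), rfl⟩
    · exact ⟨(isNAC_iff.mp h1).2, h2⟩

lemma const_not_NACb (huv : H.Adj u v) (b : Bool) : (fun _ => b) ∉ NACb huv b := by
  rintro ⟨⟨hs, -⟩, -⟩
  obtain ⟨e, he⟩ := hs (!b)
  simp at he

lemma ncard_Ab (huv : H.Adj u v) (b : Bool) : (Ab huv b).ncard = nacNum H + 1 := by
  rw [Ab_eq, Set.ncard_insert_of_notMem (const_not_NACb huv b), ncard_NACb]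

lemma ncard_pi_mem {β : Type*} (k : ℕ) (s : Set β) :
    {f : Fin k → β | ∀ i, f i ∈ s}.ncard = s.ncard ^ k := by
  rw [← Nat.card_coe_set_eq]
  have e : ↥{f : Fin k → β | ∀ i, f i ∈ s} ≃ (Fin k → ↥s) := Equiv.subtypePiEquivPi
  rw [Nat.card_congr e, Nat.card_pi]
  simp [Nat.card_coe_set_eq]

end Count2

end NAC

open NAC in
/-- If `G` is obtained by gluing `k ≥ 1` copies of `H` (on at least 3 vertices) along an
edge `uv`, then `nac(G) = (nac(H) + 1)^k - 1`. -/
theorem statement15 {V : Type*} [Fintype V] (H : SimpleGraph V)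
    (h3 : 3 ≤ Fintype.card V) (u v : V) (huv : H.Adj u v) (k : ℕ) (hk : 1 ≤ k) :
    nacNum (glueCopies H u v k) = (nacNum H + 1) ^ k - 1 := by
  classical
  set G := glueCopies H u v k with hG
  set S := {c : G.edgeSet → Bool | IsNAC G c} with hS
  set Φ : (G.edgeSet → Bool) → (Fin k → (H.edgeSet → Bool)) :=
    fun c i => res huv c i with hΦ
  have hΦinj : Function.Injective Φ := by
    intro c c' h
    exact res_eq_all huv hk (fun i => congrFun h i)
  set D : Bool → Set (Fin k → (H.edgeSet → Bool)) :=
    fun b => {d | (∀ i, d i ∈ Ab huv b) ∧ d ≠ fun _ _ => b} with hD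
  have hsurj_of : ∀ (b : Bool) (d : Fin k → H.edgeSet → Bool), d ∈ D b →
      ∃ i, Function.Surjective (d i) := by
    intro b d ⟨hmem, hne⟩
    by_contra hns
    push_neg at hns
    apply hne
    funext i e
    have h1 := not_surj_const (hns i) e ⟨s(u, v), huv⟩
    rw [h1, (hmem i).2]
  have himg : Φ '' S = D true ∪ D false := by
    ext d
    constructor
    · rintro ⟨c, hc, rfl⟩
      rw [Set.mem_setOf_eq, isNAC_iff] at hc
      obtain ⟨hs, hgood⟩ := hc
      have hval : ∀ i, res huv c i ⟨s(u, v), huv⟩ = c ⟨_, shared_mem huv⟩ :=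
        fun i => res_uv huv c i
      have hmem : ∀ i, Φ c i ∈ Ab huv (c ⟨_, shared_mem huv⟩) :=
        fun i => ⟨good_res_of_good huv hgood i, hval i⟩
      have hnec : Φ c ≠ fun _ _ => c ⟨_, shared_mem huv⟩ := by
        intro hconst
        obtain ⟨i, hi⟩ := (surj_iff huv hk).mp hs
        obtain ⟨e, he⟩ := hi (!(c ⟨_, shared_mem huv⟩))
        rw [show res huv c i = Φ c i from rfl, hconst] at he
        simp at he
      cases hcv : c ⟨_, shared_mem huv⟩
      · exact Or.inr ⟨fun i => by rw [← hcv]; exact hmem i, by rw [← hcv]; exact hnec⟩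
      · exact Or.inl ⟨fun i => by rw [← hcv]; exact hmem i, by rw [← hcv]; exact hnec⟩
    · intro hd
      have key : ∀ b, d ∈ D b → d ∈ Φ '' S := by
        intro b hdb
        obtain ⟨hmem, hne⟩ := hdb
        have hag : ∀ i j, d i ⟨s(u, v), huv⟩ = d j ⟨s(u, v), huv⟩ := by
          intro i j
          rw [(hmem i).2, (hmem j).2]
        refine ⟨glueCol huv hk d, ?_, ?_⟩
        · rw [Set.mem_setOf_eq, isNAC_iff]
          constructor
          · rw [surj_iff huv hk]
            obtain ⟨i, hi⟩ := hsurj_of b d ⟨hmem, hne⟩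
            exact ⟨i, by rw [res_glueCol huv hk hag i]; exact hi⟩
          · refine good_of_good_res huv hk (fun i => ?_)
            rw [res_glueCol huv hk hag i]
            exact (hmem i).1
        · funext i
          exact res_glueCol huv hk hag i
      rcases hd with hd | hd
      · exact key true hd
      · exact key false hd
  have hDcard : ∀ b, (D b).ncard = (nacNum H + 1) ^ k - 1 := by
    intro b
    have hT : D b = {f : Fin k → (H.edgeSet → Bool) | ∀ i, f i ∈ Ab huv b} \
        {fun _ _ => b} := by
      ext d
      simp only [hD, Set.mem_setOf_eq, Set.mem_diff, Set.mem_singleton_iff]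
    have hconstmem : (fun _ _ => b) ∈
        {f : Fin k → (H.edgeSet → Bool) | ∀ i, f i ∈ Ab huv b} := by
      intro i
      exact ⟨good_const (fun _ _ => rfl), rfl⟩
    rw [hT, Set.ncard_diff_singleton_of_mem hconstmem, ncard_pi_mem, ncard_Ab]
  have hdisjD : Disjoint (D true) (D false) := by
    rw [Set.disjoint_left]
    rintro d ⟨h1, -⟩ ⟨h2, -⟩
    have e1 := (h1 ⟨0, hk⟩).2
    have e2 := (h2 ⟨0, hk⟩).2
    rw [e1] at e2
    exact Bool.noConfusion e2
  have hcount : S.ncard = 2 * ((nacNum H + 1) ^ k - 1) := by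
    rw [← Set.ncard_image_of_injective S hΦinj, himg, Set.ncard_union_eq hdisjD,
      hDcard true, hDcard false]
    ring
  have : nacNum G = S.ncard / 2 := rfl
  rw [this, hcount]
  omega
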